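/- Let σ > 1. A decay bound of the form exp{−c·W(C·ln k)^{−1/(σ-1)}·(ln k)^{σ/(σ-1)}} (c, C > 0, k > e) decays faster than any negative power of k: for every N ∈ ℕ, exp{−c·W(C ln k)^{−1/(σ-1)}·(ln k)^{σ/(σ-1)}}·k^N → 0 as k → ∞; but slower than any stretched-exponential: for every t, ε > 0, exp{ε k^{1/t}}·exp{−c·W(C ln k)^{−1/(σ-1)}·(ln k)^{σ/(σ-1)}} → ∞ as k → ∞. -/

import Mathlib

open Real Filter

/-- the decay `exp{−c·W(C ln k)^{−1/(σ−1)}·(ln k)^{σ/(σ−1)}}` is faster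
than any negative power of `k`, but slower than any stretched exponential. -/
theorem stmt19 (σ C c : ℝ) (hσ : 1 < σ) (hC : 0 < C) (hc : 0 < c)
    (W : ℝ → ℝ)
    (hW_bounds : ∀ x : ℝ, Real.exp 1 ≤ x →
      Real.log x - Real.log (Real.log x) ≤ W x ∧
        W x ≤ Real.log x - (1 / 2) * Real.log (Real.log x)) :
    (∀ N : ℕ,
        Tendsto
          (fun k : ℝ =>
            Real.exp (-(c * (W (C * Real.log k)) ^ (-(1 / (σ - 1))) *
              (Real.log k) ^ (σ / (σ - 1)))) * k ^ N)
          atTop (nhds 0)) ∧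
      ∀ t : ℝ, 0 < t → ∀ ε : ℝ, 0 < ε →
        Tendsto
          (fun k : ℝ =>
            Real.exp (ε * k ^ (1 / t)) *
              Real.exp (-(c * (W (C * Real.log k)) ^ (-(1 / (σ - 1))) *
                (Real.log k) ^ (σ / (σ - 1)))))
          atTop atTop := by
  have hσ' : 0 < σ - 1 := by linarith
  set s : ℝ := 1 / (σ - 1) with hs_def
  have hs : 0 < s := by positivity
  have hexp : σ / (σ - 1) = 1 + s := by
    field_simp [hs_def]
    rw [hs_def, mul_add, mul_one_div_cancel hσ'.ne']
    ring
  set f : ℝ → ℝ := fun k =>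
    c * (W (C * Real.log k)) ^ (-(1 / (σ - 1))) * (Real.log k) ^ (σ / (σ - 1)) with hf_def
  -- y = C * log k tends to ∞
  have hy_top : Tendsto (fun k : ℝ => C * Real.log k) atTop atTop :=
    tendsto_log_atTop.const_mul_atTop hC
  have hly_top : Tendsto (fun k : ℝ => Real.log (C * Real.log k)) atTop atTop :=
    tendsto_log_atTop.comp hy_top
  -- eventually applicable W bounds
  have hB : ∀ᶠ k : ℝ in atTop, Real.exp 1 ≤ C * Real.log k :=
    hy_top.eventually_ge_atTop _
  -- eventually log(C log k) ≥ 2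
  have hC2 : ∀ᶠ k : ℝ in atTop, 2 ≤ Real.log (C * Real.log k) :=
    hly_top.eventually_ge_atTop 2
  -- eventually log log(C log k) ≤ (1/2) log(C log k)
  have hlog_half : ∀ᶠ v : ℝ in atTop, Real.log v ≤ (1 / 2) * v := by
    have h := Real.isLittleO_log_id_atTop.def (by norm_num : (0:ℝ) < 1/2)
    filter_upwards [h, eventually_ge_atTop (0:ℝ)] with v hv hv0
    calc Real.log v ≤ |Real.log v| := le_abs_self _
      _ ≤ (1/2) * |v| := by simpa [Real.norm_eq_abs] using hv
      _ = (1/2) * v := by rw [abs_of_nonneg hv0]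
  have hD : ∀ᶠ k : ℝ in atTop,
      Real.log (Real.log (C * Real.log k)) ≤ (1/2) * Real.log (C * Real.log k) :=
    hly_top.eventually hlog_half
  -- eventually 1 ≤ (1/2) * log (C * log k) and hence W ≥ 1 and W ≤ log(C log k)
  have hW_low : ∀ᶠ k : ℝ in atTop,
      1 ≤ W (C * Real.log k) ∧ W (C * Real.log k) ≤ Real.log (C * Real.log k) := by
    filter_upwards [hB, hC2, hD] with k hB hC2 hD
    obtain ⟨h1, h2⟩ := hW_bounds _ hB
    constructor
    · nlinarith
    · nlinarith
  -- f k ≤ c * (log k)^(1+s) eventually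
  have hf_upper : ∀ᶠ k : ℝ in atTop, f k ≤ c * (Real.log k) ^ (1 + s) := by
    filter_upwards [hW_low, tendsto_log_atTop.eventually_ge_atTop 0] with k hW hL0
    have hneg : -(1 / (σ - 1)) ≤ 0 := neg_nonpos.2 hs.le
    have h1 : (W (C * Real.log k)) ^ (-(1 / (σ - 1))) ≤ 1 :=
      Real.rpow_le_one_of_one_le_of_nonpos hW.1 hneg
    have h2 : (0:ℝ) ≤ (Real.log k) ^ (σ / (σ - 1)) := Real.rpow_nonneg hL0 _
    calc f k ≤ c * 1 * (Real.log k) ^ (σ / (σ - 1)) := by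
          apply mul_le_mul_of_nonneg_right _ h2
          exact mul_le_mul_of_nonneg_left h1 hc.le
      _ = c * (Real.log k) ^ (1 + s) := by rw [hexp]; ring
  constructor
  · -- part 1
    intro N
    -- eventually log k ≥ K * log (C * log k) for K := max (((N+1)/c)^(s⁻¹)) 1
    set K : ℝ := max (((N + 1 : ℝ) / c) ^ s⁻¹) 1 with hK_def
    have hK1 : (1:ℝ) ≤ K := le_max_right _ _
    have hK0 : (0:ℝ) < K := lt_of_lt_of_le one_pos hK1
    have hEo : (fun x : ℝ => Real.log (C * x)) =o[atTop] (id : ℝ → ℝ) := by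
      have h1 : (fun x : ℝ => Real.log C + Real.log x) =o[atTop] (id : ℝ → ℝ) :=
        (Asymptotics.isLittleO_const_id_atTop _).add Real.isLittleO_log_id_atTop
      refine h1.congr' ?_ EventuallyEq.rfl
      filter_upwards [eventually_gt_atTop (0:ℝ)] with x hx
      rw [Real.log_mul hC.ne' hx.ne']
    have hE : ∀ᶠ k : ℝ in atTop,
        K * Real.log (C * Real.log k) ≤ Real.log k := by
      have h := hEo.def (by positivity : (0:ℝ) < K⁻¹)
      have h2 : ∀ᶠ x : ℝ in atTop, K * Real.log (C * x) ≤ x := by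
        filter_upwards [h, eventually_ge_atTop (0:ℝ)] with x hx hx0
        have : |Real.log (C * x)| ≤ K⁻¹ * |x| := by simpa [Real.norm_eq_abs] using hx
        have h3 : Real.log (C * x) ≤ K⁻¹ * x := by
          calc Real.log (C * x) ≤ |Real.log (C * x)| := le_abs_self _
            _ ≤ K⁻¹ * |x| := this
            _ = K⁻¹ * x := by rw [abs_of_nonneg hx0]
        calc K * Real.log (C * x) ≤ K * (K⁻¹ * x) :=
              mul_le_mul_of_nonneg_left h3 hK0.le
          _ = x := by field_simp
      exact tendsto_log_atTop.eventually h2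
    -- main lower bound for f k
    have hf_lower : ∀ᶠ k : ℝ in atTop, (N + 1 : ℝ) * Real.log k ≤ f k := by
      filter_upwards [hW_low, hE, hC2, tendsto_log_atTop.eventually_ge_atTop 1]
        with k hW hE hC2 hL1
      set y := Real.log (C * Real.log k) with hy_def
      set L := Real.log k with hL_def
      have hy0 : (0:ℝ) < y := by linarith
      have hL0 : (0:ℝ) < L := by linarith
      have hWpos : (0:ℝ) < W (C * L) := lt_of_lt_of_le one_pos hW.1
      have hneg : -(1 / (σ - 1)) ≤ 0 := by linarith [hs]
      have h1 : (y : ℝ) ^ (-(1/(σ-1))) ≤ (W (C * L)) ^ (-(1/(σ-1))) :=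
        Real.rpow_le_rpow_of_nonpos hWpos hW.2 hneg
      have hLy : K * y ≤ L := hE
      -- (L / y)^s ≥ (N+1)/c
      have hdiv : ((N + 1 : ℝ) / c) ≤ (L / y) ^ s := by
        have hKL : K ≤ L / y := (le_div_iff₀ hy0).2 (by linarith [hLy])
        have h2 : (((N + 1 : ℝ) / c) ^ s⁻¹) ^ s ≤ K ^ s :=
          Real.rpow_le_rpow (by positivity) (le_max_left _ _) hs.le
        have h3 : K ^ s ≤ (L / y) ^ s := Real.rpow_le_rpow hK0.le hKL hs.le
        have h4 : (((N + 1 : ℝ) / c) ^ s⁻¹) ^ s = (N + 1 : ℝ) / c :=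
          Real.rpow_inv_rpow (by positivity) hs.ne'
        linarith
      have hLrw : L ^ (σ / (σ - 1)) = L * L ^ s := by
        rw [hexp, Real.rpow_add hL0, Real.rpow_one]
      have hyrw : (y : ℝ) ^ (-(1/(σ-1))) = (y ^ s)⁻¹ := by
        rw [← hs_def, Real.rpow_neg hy0.le]
      have hys : (0:ℝ) < y ^ s := Real.rpow_pos_of_pos hy0 s
      have hdiv' : (L / y) ^ s = L ^ s / y ^ s := Real.div_rpow hL0.le hy0.le s
      -- f k ≥ c * y^(-s) * L^(1+s) = c * (L/y)^s * L ≥ (N+1) * L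
      have hstep : c * (y : ℝ) ^ (-(1/(σ-1))) * L ^ (σ / (σ - 1)) ≤ f k := by
        simp only [hf_def]
        apply mul_le_mul_of_nonneg_right _ (by positivity)
        exact mul_le_mul_of_nonneg_left h1 hc.le
      have heq : c * (y : ℝ) ^ (-(1/(σ-1))) * L ^ (σ / (σ - 1))
          = c * (L / y) ^ s * L := by
        rw [hyrw, hLrw, hdiv']
        field_simp
      have hfin : (N + 1 : ℝ) * L ≤ c * (L / y) ^ s * L := by
        apply mul_le_mul_of_nonneg_right _ hL0.le
        calc (N + 1 : ℝ) = c * ((N + 1) / c) := by field_simp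
          _ ≤ c * (L / y) ^ s := mul_le_mul_of_nonneg_left hdiv hc.le
      linarith [heq ▸ hstep]
    -- conclude part 1
    have hexp_tend : Tendsto (fun k : ℝ => (N : ℝ) * Real.log k - f k) atTop atBot := by
      have hneg_log : Tendsto (fun k : ℝ => -Real.log k) atTop atBot :=
        tendsto_neg_atTop_atBot.comp tendsto_log_atTop
      refine tendsto_atBot_mono' atTop ?_ hneg_log
      filter_upwards [hf_lower] with k hk
      linarith
    have h0 : Tendsto (fun k : ℝ => Real.exp ((N : ℝ) * Real.log k - f k)) atTop (nhds 0) :=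
      Real.tendsto_exp_atBot.comp hexp_tend
    apply h0.congr'
    filter_upwards [eventually_gt_atTop (0:ℝ)] with k hk
    rw [Real.exp_sub, ← Real.log_pow, Real.exp_log (by positivity)]
    rw [div_eq_mul_inv, ← Real.exp_neg]
    ring
  · -- part 2
    intro t ht ε hε
    have hto : (fun k : ℝ => Real.log k ^ (1 + s)) =o[atTop] (fun k : ℝ => k ^ (1 / t)) :=
      isLittleO_log_rpow_rpow_atTop _ (by positivity)
    have hsmall : ∀ᶠ k : ℝ in atTop, c * Real.log k ^ (1 + s) ≤ (ε / 2) * k ^ (1 / t) := by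
      have h := hto.def (by positivity : (0:ℝ) < ε / 2 / c)
      filter_upwards [h, eventually_ge_atTop (0:ℝ), tendsto_log_atTop.eventually_ge_atTop 0]
        with k hk hk0 hL0
      have h1 : |Real.log k ^ (1 + s)| ≤ ε / 2 / c * |k ^ (1 / t)| := by
        simpa [Real.norm_eq_abs] using hk
      have h2 : Real.log k ^ (1 + s) ≤ ε / 2 / c * k ^ (1 / t) := by
        calc Real.log k ^ (1 + s) ≤ |Real.log k ^ (1 + s)| := le_abs_self _
          _ ≤ ε / 2 / c * |k ^ (1 / t)| := h1
          _ = ε / 2 / c * k ^ (1 / t) := by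
              rw [abs_of_nonneg (Real.rpow_nonneg hk0 _)]
      calc c * Real.log k ^ (1 + s) ≤ c * (ε / 2 / c * k ^ (1 / t)) :=
            mul_le_mul_of_nonneg_left h2 hc.le
        _ = (ε / 2) * k ^ (1 / t) := by field_simp
    have hmain : Tendsto (fun k : ℝ => ε * k ^ (1 / t) - f k) atTop atTop := by
      have hhalf : Tendsto (fun k : ℝ => (ε / 2) * k ^ (1 / t)) atTop atTop :=
        (tendsto_rpow_atTop (by positivity)).const_mul_atTop (by positivity)
      apply tendsto_atTop_mono' atTop _ hhalf
      filter_upwards [hf_upper, hsmall] with k h1 h2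
      have : f k ≤ (ε / 2) * k ^ (1 / t) := le_trans h1 h2
      linarith
    have h0 : Tendsto (fun k : ℝ => Real.exp (ε * k ^ (1 / t) - f k)) atTop atTop :=
      Real.tendsto_exp_atTop.comp hmain
    apply h0.congr
    intro k
    rw [Real.exp_sub, div_eq_mul_inv, ← Real.exp_neg]
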